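/- Let (P₁,P₂,P₃,P₄) and (P′₁,P′₂,P′₃,P′₄) be two quadruples of nonzero null vectors in ℂ^{n,1}, each pairwise linearly independent, with Gram matrices G and G′. Then there exists a ℂ-linear map A: ℂ^{n,1} → ℂ^{n,1} with ⟨AZ,AW⟩ = ⟨Z,W⟩ for all Z,W and nonzero scalars λ_i with A·P_i = λ_i·P′_i (i=1,2,3,4) if and only if there exists an invertible diagonal complex 4×4 matrix D with G′ = D*·G·D. -/

import Mathlib

open Complex Matrix
open scoped ComplexConjugate

noncomputable section

/-- The Hermitian form of signature `(n,1)` on `ℂ^{n+1}`: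
`⟨Z,W⟩ = Z₁·conj W_{n+1} + Z₂·conj W₂ + ⋯ + Z_n·conj W_n + Z_{n+1}·conj W₁`. -/
def herm {n : ℕ} (Z W : Fin (n + 1) → ℂ) : ℂ :=
  Z 0 * conj (W (Fin.last n)) + Z (Fin.last n) * conj (W 0) +
    ∑ i ∈ Finset.univ.filter (fun i : Fin (n + 1) => i ≠ 0 ∧ i ≠ Fin.last n),
      Z i * conj (W i)

/-- The Gram matrix of a quadruple of vectors. -/
def gram {n : ℕ} (P : Fin 4 → Fin (n + 1) → ℂ) : Matrix (Fin 4) (Fin 4) ℂ :=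
  fun i j => herm (P i) (P j)

/-- A quadruple of nonzero null vectors, pairwise linearly independent. -/
def IsNullQuadruple {n : ℕ} (P : Fin 4 → Fin (n + 1) → ℂ) : Prop :=
  (∀ i, P i ≠ 0) ∧ (∀ i, herm (P i) (P i) = 0) ∧
    ∀ i j, i ≠ j → LinearIndependent ℂ ![P i, P j]

/-- The Korányi–Reimann complex cross-ratio. -/
def crossRatio {n : ℕ} (P₁ P₂ P₃ P₄ : Fin (n + 1) → ℂ) : ℂ :=
  (herm P₃ P₁ * herm P₄ P₂) / (herm P₄ P₁ * herm P₃ P₂)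

/-- Cartan's angular invariant. -/
def cartan {n : ℕ} (P₁ P₂ P₃ : Fin (n + 1) → ℂ) : ℝ :=
  (-(herm P₁ P₂ * herm P₂ P₃ * herm P₃ P₁)).arg

/-- `G` is the normalized Gram matrix of the quadruple `P`. -/
def IsNormalizedGram {n : ℕ} (P : Fin 4 → Fin (n + 1) → ℂ)
    (G : Matrix (Fin 4) (Fin 4) ℂ) : Prop :=
  (∃ d : Fin 4 → ℂ, (∀ i, d i ≠ 0) ∧
      G = (Matrix.diagonal d)ᴴ * gram P * Matrix.diagonal d) ∧
    G 0 1 = 1 ∧ G 1 2 = 1 ∧ G 2 3 = 1 ∧ ‖G 0 2‖ = 1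

/-- Two quadruples are congruent if a linear map preserving the Hermitian form
sends one to the other up to nonzero scalars. -/
def QuadCongruent {n : ℕ} (P P' : Fin 4 → Fin (n + 1) → ℂ) : Prop :=
  ∃ A : (Fin (n + 1) → ℂ) →ₗ[ℂ] (Fin (n + 1) → ℂ),
    (∀ Z W, herm (A Z) (A W) = herm Z W) ∧
    ∃ lam : Fin 4 → ℂ, (∀ i, lam i ≠ 0) ∧ ∀ i, A (P i) = lam i • P' i

variable {n : ℕ}

lemma herm_add_left (Z Z' W : Fin (n+1) → ℂ) : herm (Z + Z') W = herm Z W + herm Z' W := by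
  simp [herm, add_mul, Finset.sum_add_distrib]; ring

lemma herm_smul_left (c : ℂ) (Z W : Fin (n+1) → ℂ) : herm (c • Z) W = c * herm Z W := by
  simp [herm, mul_add, Finset.mul_sum, mul_assoc]

lemma herm_add_right (Z W W' : Fin (n+1) → ℂ) : herm Z (W + W') = herm Z W + herm Z W' := by
  simp [herm, mul_add, Finset.sum_add_distrib]; ring

lemma herm_smul_right (c : ℂ) (Z W : Fin (n+1) → ℂ) : herm Z (c • W) = conj c * herm Z W := by
  simp [herm, mul_add, Finset.mul_sum]; ring

lemma herm_conj (Z W : Fin (n+1) → ℂ) : conj (herm Z W) = herm W Z := by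
  simp only [herm, map_add, _root_.map_mul, map_sum, Complex.conj_conj]
  rw [Finset.sum_congr rfl (fun i _ => mul_comm ((starRingEnd ℂ) (Z i)) (W i))]; ring

lemma herm_self_im (Z : Fin (n+1) → ℂ) : (herm Z Z).im = 0 := by
  have h := herm_conj Z Z
  have : (herm Z Z).im = -(herm Z Z).im := by
    conv_lhs => rw [← h]
    simp
  linarith

/-- `herm · W` as a linear map. -/
def hermL (W : Fin (n+1) → ℂ) : (Fin (n+1) → ℂ) →ₗ[ℂ] ℂ where
  toFun Z := herm Z W
  map_add' a b := herm_add_left a b W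
  map_smul' c a := herm_smul_left c a W

@[simp] lemma hermL_apply (W Z : Fin (n+1) → ℂ) : hermL W Z = herm Z W := rfl

lemma no_isotropic_pair (u v : Fin (n+2) → ℂ) (hi : LinearIndependent ℂ ![u, v])
    (huu : herm u u = 0) (huv : herm u v = 0) (hvv : (herm v v).re ≤ 0) : False := by
  classical
  -- the functional z ↦ z 0 - z last
  let φ : (Fin (n+2) → ℂ) →ₗ[ℂ] ℂ :=
    { toFun := fun z => z 0 - z (Fin.last (n+1))
      map_add' := fun a b => by simp; ring
      map_smul' := fun c a => by simp; ring }
  have hlast0 : (Fin.last (n+1) : Fin (n+2)) ≠ 0 := by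
    simp [Fin.ext_iff]
  have hφsurj : Function.Surjective φ := by
    intro a
    refine ⟨(fun j => if j = 0 then a else 0 : Fin (n+2) → ℂ), ?_⟩
    simp [φ, hlast0]
  have hrank : Module.finrank ℂ (LinearMap.ker φ) = n+1 := by
    have h1 := LinearMap.finrank_range_add_finrank_ker φ
    rw [LinearMap.range_eq_top.2 hφsurj, finrank_top, Module.finrank_self,
      Module.finrank_pi] at h1
    simp at h1; omega
  set S := LinearMap.ker φ
  set U := Submodule.span ℂ (Set.range ![u, v]) with hU
  have hrankU : Module.finrank ℂ U = 2 := by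
    rw [finrank_span_eq_card hi]; simp
  have hinf : 0 < Module.finrank ℂ ↥(S ⊓ U) := by
    have h1 := Submodule.finrank_sup_add_finrank_inf_eq S U
    have h2 := Submodule.finrank_le (S ⊔ U)
    have h3 : Module.finrank ℂ (Fin (n+2) → ℂ) = n + 2 := by
      rw [Module.finrank_pi]; simp
    omega
  haveI : Nontrivial ↥(S ⊓ U) := Module.finrank_pos_iff.mp hinf
  obtain ⟨⟨w, hw⟩, hwne⟩ := exists_ne (0 : ↥(S ⊓ U))
  have hwne' : w ≠ 0 := by
    simpa [Submodule.mk_eq_zero] using hwne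
  obtain ⟨hwS, hwU⟩ := Submodule.mem_inf.1 hw
  -- w = a • u + b • v
  obtain ⟨c, hc⟩ := (Submodule.mem_span_range_iff_exists_fun ℂ).1 hwU
  rw [Fin.sum_univ_two] at hc
  simp only [Matrix.cons_val_zero, Matrix.cons_val_one, Matrix.head_cons] at hc
  set a := c 0; set b := c 1
  have hvu : herm v u = 0 := by
    rw [← herm_conj u v, huv, map_zero]
  -- value of herm w w from the U side
  have hval : herm w w = ↑(Complex.normSq b) * herm v v := by
    rw [← hc]
    simp only [herm_add_left, herm_add_right, herm_smul_left, herm_smul_right, huu, huv, hvu]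
    rw [show (starRingEnd ℂ) a * (a * 0 + b * 0) + (starRingEnd ℂ) b * (a * 0 + b * herm v v)
      = b * (starRingEnd ℂ) b * herm v v from by ring, Complex.mul_conj]
  have hre_nonpos : (herm w w).re ≤ 0 := by
    rw [hval]
    rw [Complex.mul_re, Complex.ofReal_re, Complex.ofReal_im]
    nlinarith [Complex.normSq_nonneg b]
  -- value from the S side
  have hwlast : w (Fin.last (n+1)) = w 0 := by
    have : φ w = 0 := hwS
    simp [φ] at this
    linear_combination -this
  have hval2 : herm w w = ↑(Complex.normSq (w 0) + Complex.normSq (w 0) +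
      ∑ i ∈ Finset.univ.filter (fun i : Fin (n+2) => i ≠ 0 ∧ i ≠ Fin.last (n+1)),
        Complex.normSq (w i)) := by
    rw [herm, hwlast]
    push_cast
    rw [Complex.mul_conj, Finset.sum_congr rfl fun i (_ : i ∈ Finset.univ.filter
      (fun i : Fin (n+2) => i ≠ 0 ∧ i ≠ Fin.last (n+1))) => (Complex.mul_conj (w i))]
  have hre_pos : 0 < (herm w w).re := by
    rw [hval2, Complex.ofReal_re]
    obtain ⟨k, hk⟩ := Function.ne_iff.1 hwne'
    have hsumnn : 0 ≤ ∑ i ∈ Finset.univ.filter (fun i : Fin (n+2) => i ≠ 0 ∧ i ≠ Fin.last (n+1)),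
        Complex.normSq (w i) := Finset.sum_nonneg fun i _ => Complex.normSq_nonneg _
    by_cases hk0 : k = 0
    · have : 0 < Complex.normSq (w 0) := by
        rw [Complex.normSq_pos]; rw [hk0] at hk; exact hk
      nlinarith [Complex.normSq_nonneg (w 0)]
    by_cases hkl : k = Fin.last (n+1)
    · have : 0 < Complex.normSq (w 0) := by
        rw [Complex.normSq_pos, ← hwlast]; rw [hkl] at hk; exact hk
      nlinarith [Complex.normSq_nonneg (w 0)]
    · have hmem : k ∈ Finset.univ.filter (fun i : Fin (n+2) => i ≠ 0 ∧ i ≠ Fin.last (n+1)) := by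
        simp [hk0, hkl]
      have : 0 < Complex.normSq (w k) := Complex.normSq_pos.2 hk
      have hle := Finset.single_le_sum (f := fun i => Complex.normSq (w i))
        (fun i _ => Complex.normSq_nonneg (w i)) hmem
      nlinarith [Complex.normSq_nonneg (w 0)]
  linarith

/-- Extension of Gram-equal tuples to a global isometric linear map, for complex
inner product spaces of equal finite dimension. -/
lemma exists_isometric_extension {E F : Type*} [NormedAddCommGroup E] [InnerProductSpace ℂ E]
    [NormedAddCommGroup F] [InnerProductSpace ℂ F] [FiniteDimensional ℂ E] [FiniteDimensional ℂ F]
    (hEF : Module.finrank ℂ E = Module.finrank ℂ F) {m : ℕ} (x : Fin m → E) (y : Fin m → F)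
    (hg : ∀ i j, (inner ℂ (x i) (x j) : ℂ) = (inner ℂ (y i) (y j) : ℂ)) :
    ∃ B : E →ₗ[ℂ] F, (∀ a b, (inner ℂ (B a) (B b) : ℂ) = (inner ℂ a b : ℂ)) ∧ ∀ i, B (x i) = y i := by
  classical
  let u : (Fin m → ℂ) →ₗ[ℂ] E :=
    { toFun := fun c => ∑ i, c i • x i
      map_add' := fun a b => by simp [add_smul, Finset.sum_add_distrib]
      map_smul' := fun r a => by simp [mul_smul, Finset.smul_sum]
      }
  let v : (Fin m → ℂ) →ₗ[ℂ] F :=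
    { toFun := fun c => ∑ i, c i • y i
      map_add' := fun a b => by simp [add_smul, Finset.sum_add_distrib]
      map_smul' := fun r a => by simp [mul_smul, Finset.smul_sum]
      }
  have hic : ∀ c d : Fin m → ℂ, (inner ℂ (u c) (u d) : ℂ) = inner ℂ (v c) (v d) := by
    intro c d
    simp only [u, v, LinearMap.coe_mk, AddHom.coe_mk, sum_inner, inner_sum,
      inner_smul_left, inner_smul_right, hg]
  have hker : LinearMap.ker u = LinearMap.ker v := by
    ext c
    simp only [LinearMap.mem_ker]
    constructor <;> intro h
    · have h2 : (inner ℂ (v c) (v c) : ℂ) = 0 := by rw [← hic, h, inner_zero_left]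
      exact inner_self_eq_zero.mp h2
    · have h2 : (inner ℂ (u c) (u c) : ℂ) = 0 := by rw [hic, h, inner_zero_left]
      exact inner_self_eq_zero.mp h2
  set S := LinearMap.range u with hS
  set S' := LinearMap.range v with hS'
  let e : ↥S →ₗ[ℂ] F :=
    ((LinearMap.ker u).liftQ v (le_of_eq hker)).comp u.quotKerEquivRange.symm.toLinearMap
  have he : ∀ c, e ⟨u c, LinearMap.mem_range_self u c⟩ = v c := by
    intro c
    show ((LinearMap.ker u).liftQ v (le_of_eq hker))
      (u.quotKerEquivRange.symm ⟨u c, LinearMap.mem_range_self u c⟩) = v c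
    rw [LinearMap.quotKerEquivRange_symm_apply_image]
    exact Submodule.liftQ_apply _ v c
  have heinner : ∀ s t : ↥S, (inner ℂ (e s) (e t) : ℂ) = inner ℂ (s : E) (t : E) := by
    rintro ⟨s, hs⟩ ⟨t, ht⟩
    obtain ⟨c, rfl⟩ := hs
    obtain ⟨d, rfl⟩ := ht
    rw [he, he, ← hic]
  have heS' : ∀ s : ↥S, e s ∈ S' := by
    rintro ⟨s, hs⟩
    obtain ⟨c, rfl⟩ := hs
    rw [he]
    exact LinearMap.mem_range_self v c
  have hdim : Module.finrank ℂ ↥S = Module.finrank ℂ ↥S' := by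
    have h1 := u.quotKerEquivRange.finrank_eq
    have h2 := v.quotKerEquivRange.finrank_eq
    rw [hker] at h1
    rw [← h1, ← h2]
  have hdimperp : Module.finrank ℂ ↥Sᗮ = Module.finrank ℂ ↥S'ᗮ := by
    have h1 := Submodule.finrank_add_finrank_orthogonal S
    have h2 := Submodule.finrank_add_finrank_orthogonal S'
    omega
  let g : ↥Sᗮ ≃ₗᵢ[ℂ] ↥S'ᗮ :=
    ((stdOrthonormalBasis ℂ ↥Sᗮ).repr.trans
      (LinearIsometryEquiv.piLpCongrLeft 2 ℂ ℂ (finCongr hdimperp))).trans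
      (stdOrthonormalBasis ℂ ↥S'ᗮ).repr.symm
  let B : E →ₗ[ℂ] F :=
    e.comp (Submodule.orthogonalProjection S).toLinearMap +
      (S'ᗮ.subtype.comp g.toLinearEquiv.toLinearMap).comp (Submodule.orthogonalProjection Sᗮ).toLinearMap
  have hBapply : ∀ z : E, B z = e (Submodule.orthogonalProjection S z) + ↑(g (Submodule.orthogonalProjection Sᗮ z)) :=
    fun z => rfl
  refine ⟨B, ?_, ?_⟩
  · intro a b
    rw [hBapply, hBapply]
    rw [inner_add_left, inner_add_right, inner_add_right]
    rw [Submodule.inner_right_of_mem_orthogonal (heS' _) (g _).2,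
      Submodule.inner_left_of_mem_orthogonal (heS' _) (g _).2]
    rw [heinner]
    have hgg : (inner ℂ ((g (Submodule.orthogonalProjection Sᗮ a) : F)) ((g (Submodule.orthogonalProjection Sᗮ b)) : F) : ℂ)
        = inner ℂ ((Submodule.orthogonalProjection Sᗮ a : E)) ((Submodule.orthogonalProjection Sᗮ b : E)) := by
      rw [← Submodule.coe_inner, g.inner_map_map, Submodule.coe_inner]
    rw [hgg]
    have hsplit : ∀ w : E, ((Submodule.orthogonalProjection S w : E) +
        (Submodule.orthogonalProjection Sᗮ w : E)) = w := fun w =>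
      S.starProjection_add_starProjection_orthogonal w
    conv_rhs => rw [← hsplit a, ← hsplit b]
    rw [inner_add_left, inner_add_right, inner_add_right]
    rw [Submodule.inner_right_of_mem_orthogonal (Submodule.orthogonalProjection S a).2
        (Submodule.orthogonalProjection Sᗮ b).2,
      Submodule.inner_left_of_mem_orthogonal (Submodule.orthogonalProjection S b).2
        (Submodule.orthogonalProjection Sᗮ a).2]
  · intro i
    have hx : u (Pi.single i 1) = x i := by
      simp [u, Pi.single_apply, ite_smul]
    have hxS : x i ∈ S := by rw [← hx]; exact LinearMap.mem_range_self u _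
    have hproj1 : Submodule.orthogonalProjection S (x i) = ⟨x i, hxS⟩ :=
      Submodule.orthogonalProjection_mem_subspace_eq_self (⟨x i, hxS⟩ : ↥S)
    have hproj2 : Submodule.orthogonalProjection Sᗮ (x i) = 0 :=
      Submodule.orthogonalProjectionOnto_apply_of_mem_orthogonal
        (Submodule.le_orthogonal_orthogonal S hxS)
    rw [hBapply, hproj1, hproj2, map_zero]
    have : (⟨x i, hxS⟩ : ↥S) = ⟨u (Pi.single i 1), LinearMap.mem_range_self u _⟩ :=
      Subtype.ext hx.symm
    rw [this, he]
    have hy : v (Pi.single i 1) = y i := by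
      simp [v, Pi.single_apply, ite_smul]
    simp [hy]

lemma herm_neg_left (Z W : Fin (n+1) → ℂ) : herm (-Z) W = -herm Z W := by
  have h := herm_smul_left (-1) Z W
  simpa using h

lemma herm_sub_left (Z Z' W : Fin (n+1) → ℂ) : herm (Z - Z') W = herm Z W - herm Z' W := by
  rw [sub_eq_add_neg, herm_add_left, herm_neg_left, sub_eq_add_neg]

lemma herm_neg_right (Z W : Fin (n+1) → ℂ) : herm Z (-W) = -herm Z W := by
  have h := herm_smul_right (-1) Z W
  simpa using h

lemma herm_sub_right (Z W W' : Fin (n+1) → ℂ) : herm Z (W - W') = herm Z W - herm Z W' := by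
  rw [sub_eq_add_neg, herm_add_right, herm_neg_right, sub_eq_add_neg]

lemma herm_zero_left (W : Fin (n+1) → ℂ) : herm 0 W = 0 := by
  have h := herm_smul_left 0 0 W
  simpa using h

lemma herm_zero_right (Z : Fin (n+1) → ℂ) : herm Z 0 = 0 := by
  have h := herm_smul_right 0 Z 0
  simpa using h

/-- The `herm`-orthogonal complement of the span of two vectors. -/
def Perp (a b : Fin (n+1) → ℂ) : Submodule ℂ (Fin (n+1) → ℂ) :=
  LinearMap.ker (hermL a) ⊓ LinearMap.ker (hermL b)

lemma mem_Perp {a b z : Fin (n+1) → ℂ} : z ∈ Perp a b ↔ herm z a = 0 ∧ herm z b = 0 := by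
  simp [Perp, LinearMap.mem_ker]

lemma perp_posdef (e1 e2 : Fin (n+2) → ℂ) (h11 : herm e1 e1 = 0) (h12 : herm e1 e2 = 1)
    {z : Fin (n+2) → ℂ} (hz1 : herm z e1 = 0) (hz2 : herm z e2 = 0) (hzne : z ≠ 0) :
    0 < (herm z z).re := by
  by_contra h
  push_neg at h
  apply no_isotropic_pair e1 z ?_ h11 ?_ h
  · rw [linearIndependent_fin2]
    refine ⟨hzne, fun a ha => ?_⟩
    simp only [Matrix.cons_val_one, Matrix.head_cons, Matrix.cons_val_zero] at ha
    have : herm e1 e2 = a * herm z e2 := by rw [← ha, herm_smul_left]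
    rw [h12, hz2, mul_zero] at this
    exact one_ne_zero this
  · rw [← herm_conj z e1, hz1, map_zero]

lemma finrank_Perp (e1 e2 : Fin (n+2) → ℂ) (h11 : herm e1 e1 = 0) (h22 : herm e2 e2 = 0)
    (h12 : herm e1 e2 = 1) : Module.finrank ℂ ↥(Perp e1 e2) = n := by
  have h21 : herm e2 e1 = 1 := by rw [← herm_conj e1 e2, h12]; simp
  let F : (Fin (n+2) → ℂ) →ₗ[ℂ] ℂ × ℂ := (hermL e1).prod (hermL e2)
  have hPerp : Perp e1 e2 = LinearMap.ker F := by
    rw [Perp, LinearMap.ker_prod]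
  have hsurj : Function.Surjective F := by
    rintro ⟨a, b⟩
    refine ⟨b • e1 + a • e2, ?_⟩
    show (herm (b • e1 + a • e2) e1, herm (b • e1 + a • e2) e2) = (a, b)
    rw [herm_add_left, herm_add_left, herm_smul_left, herm_smul_left, herm_smul_left,
      herm_smul_left, h11, h22, h12, h21]
    simp
  have h2 : Module.finrank ℂ (Fin (n+2) → ℂ) = n+2 := by simp
  have h3 : Module.finrank ℂ (ℂ × ℂ) = 2 := by simp
  have h4 : Module.finrank ℂ ↥(LinearMap.range F) = Module.finrank ℂ (ℂ × ℂ) := by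
    rw [LinearMap.range_eq_top.2 hsurj]; exact finrank_top ℂ (ℂ × ℂ)
  have h1 := LinearMap.finrank_range_add_finrank_ker F
  rw [h4, h3, h2] at h1
  have h6 : Module.finrank ℂ ↥(LinearMap.ker F) = n := by omega
  rw [hPerp]
  exact h6

/-- Copy of the subtype of `Perp a b`, carrying only algebraic instances. -/
def PerpSp {k : ℕ} (a b : Fin (k+1) → ℂ) : Type := ↥(Perp a b)

instance {k : ℕ} (a b : Fin (k+1) → ℂ) : AddCommGroup (PerpSp a b) :=
  inferInstanceAs (AddCommGroup ↥(Perp a b))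

instance {k : ℕ} (a b : Fin (k+1) → ℂ) : Module ℂ (PerpSp a b) :=
  inferInstanceAs (Module ℂ ↥(Perp a b))

instance {k : ℕ} (a b : Fin (k+1) → ℂ) : FiniteDimensional ℂ (PerpSp a b) :=
  inferInstanceAs (FiniteDimensional ℂ ↥(Perp a b))

/-- The underlying vector of an element of `PerpSp a b`. -/
def PerpSp.val {k : ℕ} {a b : Fin (k+1) → ℂ} (z : PerpSp a b) : Fin (k+1) → ℂ :=
  Subtype.val z

/-- Constructor of an element of `PerpSp a b`. -/
def PerpSp.mk' {k : ℕ} {a b : Fin (k+1) → ℂ} (z : Fin (k+1) → ℂ) (h : z ∈ Perp a b) :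
    PerpSp a b := ⟨z, h⟩

lemma PerpSp.prop {k : ℕ} {a b : Fin (k+1) → ℂ} (z : PerpSp a b) : z.val ∈ Perp a b :=
  Subtype.prop z

@[simp] lemma PerpSp.val_mk {k : ℕ} {a b z : Fin (k+1) → ℂ} (h : z ∈ Perp a b) :
    PerpSp.val (PerpSp.mk' z h : PerpSp a b) = z := rfl

@[simp] lemma PerpSp.val_add {k : ℕ} {a b : Fin (k+1) → ℂ} (z w : PerpSp a b) :
    (z + w).val = z.val + w.val := rfl

@[simp] lemma PerpSp.val_smul {k : ℕ} {a b : Fin (k+1) → ℂ} (c : ℂ) (z : PerpSp a b) :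
    (c • z).val = c • z.val := rfl

@[simp] lemma PerpSp.val_zero {k : ℕ} {a b : Fin (k+1) → ℂ} :
    (0 : PerpSp a b).val = 0 := rfl

lemma PerpSp.ext {k : ℕ} {a b : Fin (k+1) → ℂ} {z w : PerpSp a b} (h : z.val = w.val) :
    z = w := Subtype.ext h

lemma finrank_PerpSp {k : ℕ} (a b : Fin (k+1) → ℂ) :
    Module.finrank ℂ (PerpSp a b) = Module.finrank ℂ ↥(Perp a b) := rfl

/-- The inclusion of `PerpSp a b` into the ambient space. -/
def PerpSp.incl {k : ℕ} (a b : Fin (k+1) → ℂ) : PerpSp a b →ₗ[ℂ] (Fin (k+1) → ℂ) where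
  toFun := PerpSp.val
  map_add' _ _ := rfl
  map_smul' _ _ := rfl

/-- Corestriction of a linear map to `PerpSp a b`. -/
def PerpSp.corestrict {k : ℕ} (a b : Fin (k+1) → ℂ)
    (f : (Fin (k+1) → ℂ) →ₗ[ℂ] (Fin (k+1) → ℂ)) (h : ∀ z, f z ∈ Perp a b) :
    (Fin (k+1) → ℂ) →ₗ[ℂ] PerpSp a b where
  toFun z := (⟨f z, h z⟩ : PerpSp a b)
  map_add' x y := PerpSp.ext (by simp; rfl)
  map_smul' c x := PerpSp.ext (by simp; rfl)


lemma congruent_of_gram_eq {m : ℕ} (P P' : Fin 4 → Fin (m+2) → ℂ)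
    (hne : ∀ i, P i ≠ 0) (hnull : ∀ i, herm (P i) (P i) = 0)
    (hind : ∀ i j, i ≠ j → LinearIndependent ℂ ![P i, P j])
    (hnull' : ∀ i, herm (P' i) (P' i) = 0)
    (hgij : ∀ i j, herm (P i) (P j) = herm (P' i) (P' j)) :
    ∃ A : (Fin (m+2) → ℂ) →ₗ[ℂ] (Fin (m+2) → ℂ),
      (∀ Z W, herm (A Z) (A W) = herm Z W) ∧ ∀ i, A (P i) = P' i := by
  classical
  have hg01 : herm (P 0) (P 1) ≠ 0 := by
    intro h0
    exact no_isotropic_pair (P 0) (P 1) (hind 0 1 (by decide)) (hnull 0) h0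
      (by rw [hnull 1]; simp)
  set c : ℂ := (conj (herm (P 0) (P 1)))⁻¹ with hc
  have hcne : c ≠ 0 := inv_ne_zero (by simpa using hg01)
  set e1 : Fin (m+2) → ℂ := P 0 with he1
  set e2 : Fin (m+2) → ℂ := c • P 1 with he2
  set e1' : Fin (m+2) → ℂ := P' 0 with he1'
  set e2' : Fin (m+2) → ℂ := c • P' 1 with he2'
  have hcconj : conj c = (herm (P 0) (P 1))⁻¹ := by rw [hc, map_inv₀, Complex.conj_conj]
  have h11 : herm e1 e1 = 0 := hnull 0
  have h22 : herm e2 e2 = 0 := by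
    rw [he2, herm_smul_left, herm_smul_right, hnull 1]; ring
  have h12 : herm e1 e2 = 1 := by
    rw [he2, herm_smul_right, hcconj, inv_mul_cancel₀ hg01]
  have h21 : herm e2 e1 = 1 := by rw [← herm_conj e1 e2, h12]; simp
  have h11' : herm e1' e1' = 0 := hnull' 0
  have h22' : herm e2' e2' = 0 := by
    rw [he2', herm_smul_left, herm_smul_right, hnull' 1]; ring
  have h12' : herm e1' e2' = 1 := by
    rw [he2', herm_smul_right, hcconj, ← hgij 0 1, inv_mul_cancel₀ hg01]
  have h21' : herm e2' e1' = 1 := by rw [← herm_conj e1' e2', h12']; simp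
  -- linear functionals
  set f1 := hermL e1
  set f2 := hermL e2
  -- projections onto the orthocomplement of the span of e1, e2
  set ρ : (Fin (m+2) → ℂ) →ₗ[ℂ] (Fin (m+2) → ℂ) :=
    LinearMap.id - (f2.smulRight e1 + f1.smulRight e2) with hρdef
  set ρ' : (Fin (m+2) → ℂ) →ₗ[ℂ] (Fin (m+2) → ℂ) :=
    LinearMap.id - ((hermL e2').smulRight e1' + (hermL e1').smulRight e2') with hρ'def
  have hρ : ∀ Z, ρ Z = Z - (herm Z e2 • e1 + herm Z e1 • e2) := fun Z => rfl
  have hρ' : ∀ Z, ρ' Z = Z - (herm Z e2' • e1' + herm Z e1' • e2') := fun Z => rfl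
  have hρmem : ∀ Z, ρ Z ∈ Perp e1 e2 := by
    intro Z
    rw [mem_Perp, hρ]
    constructor
    · rw [herm_sub_left, herm_add_left, herm_smul_left, herm_smul_left, h11, h21]; ring
    · rw [herm_sub_left, herm_add_left, herm_smul_left, herm_smul_left, h12, h22]; ring
  have hρ'mem : ∀ Z, ρ' Z ∈ Perp e1' e2' := by
    intro Z
    rw [mem_Perp, hρ']
    constructor
    · rw [herm_sub_left, herm_add_left, herm_smul_left, herm_smul_left, h11', h21']; ring
    · rw [herm_sub_left, herm_add_left, herm_smul_left, herm_smul_left, h12', h22']; ring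
  -- the expansion of herm on the projections
  have expand : ∀ Z W, herm (ρ Z) (ρ W)
      = herm Z W - herm Z e2 * conj (herm W e1) - herm Z e1 * conj (herm W e2) := by
    intro Z W
    have e1W : herm e1 W = conj (herm W e1) := (herm_conj W e1).symm
    have e2W : herm e2 W = conj (herm W e2) := (herm_conj W e2).symm
    rw [hρ Z, hρ W]
    simp only [herm_sub_left, herm_sub_right, herm_add_left, herm_add_right, herm_smul_left,
      herm_smul_right, h11, h22, h12, h21, e1W, e2W]
    ring
  have expand' : ∀ Z W, herm (ρ' Z) (ρ' W)
      = herm Z W - herm Z e2' * conj (herm W e1') - herm Z e1' * conj (herm W e2') := by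
    intro Z W
    have e1W : herm e1' W = conj (herm W e1') := (herm_conj W e1').symm
    have e2W : herm e2' W = conj (herm W e2') := (herm_conj W e2').symm
    rw [hρ' Z, hρ' W]
    simp only [herm_sub_left, herm_sub_right, herm_add_left, herm_add_right, herm_smul_left,
      herm_smul_right, h11', h22', h12', h21', e1W, e2W]
    ring
  have hdec : ∀ Z W, herm Z W
      = herm Z e2 * conj (herm W e1) + herm Z e1 * conj (herm W e2) + herm (ρ Z) (ρ W) := by
    intro Z W; rw [expand]; ring
  -- matching of the herm products with e1, e2
  have a1 : ∀ i, herm (P i) e1 = herm (P' i) e1' := fun i => hgij i 0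
  have a2 : ∀ i, herm (P i) e2 = herm (P' i) e2' := by
    intro i
    rw [he2, he2', herm_smul_right, herm_smul_right, hgij i 1]
  have hρg : ∀ i j, herm (ρ (P i)) (ρ (P j)) = herm (ρ' (P' i)) (ρ' (P' j)) := by
    intro i j
    rw [expand, expand', hgij i j, a1 i, a1 j, a2 i, a2 j]
  -- positive definiteness of Perp
  have hpos : ∀ z ∈ Perp e1 e2, z ≠ 0 → 0 < (herm z z).re := by
    intro z hz hzne
    exact perp_posdef e1 e2 h11 h12 (mem_Perp.1 hz).1 (mem_Perp.1 hz).2 hzne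
  have hpos' : ∀ z ∈ Perp e1' e2', z ≠ 0 → 0 < (herm z z).re := by
    intro z hz hzne
    exact perp_posdef e1' e2' h11' h12' (mem_Perp.1 hz).1 (mem_Perp.1 hz).2 hzne
  -- inner product structure on the orthocomplement
  letI core : InnerProductSpace.Core ℂ (PerpSp e1 e2) :=
    { inner := fun s t => herm t.val s.val
      conj_inner_symm := fun s t => herm_conj _ _
      re_inner_nonneg := fun s => by
        show 0 ≤ (herm s.val s.val).re
        by_cases h : s.val = 0
        · rw [h, herm_zero_left]; simp
        · exact le_of_lt (hpos _ s.prop h)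
      add_left := fun s t r => herm_add_right _ _ _
      smul_left := fun s t r => herm_smul_right _ _ _
      definite := fun s h => by
        have h' : herm s.val s.val = 0 := h
        by_contra hs
        have hs' : s.val ≠ 0 := fun h0 => hs (PerpSp.ext h0)
        have := hpos _ s.prop hs'
        rw [h'] at this
        simp at this }
  letI core' : InnerProductSpace.Core ℂ (PerpSp e1' e2') :=
    { inner := fun s t => herm t.val s.val
      conj_inner_symm := fun s t => herm_conj _ _
      re_inner_nonneg := fun s => by
        show 0 ≤ (herm s.val s.val).re
        by_cases h : s.val = 0
        · rw [h, herm_zero_left]; simp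
        · exact le_of_lt (hpos' _ s.prop h)
      add_left := fun s t r => herm_add_right _ _ _
      smul_left := fun s t r => herm_smul_right _ _ _
      definite := fun s h => by
        have h' : herm s.val s.val = 0 := h
        by_contra hs
        have hs' : s.val ≠ 0 := fun h0 => hs (PerpSp.ext h0)
        have := hpos' _ s.prop hs'
        rw [h'] at this
        simp at this }
  letI : NormedAddCommGroup (PerpSp e1 e2) := core.toNormedAddCommGroup
  letI : InnerProductSpace ℂ (PerpSp e1 e2) := InnerProductSpace.ofCore core.toCore
  letI : NormedAddCommGroup (PerpSp e1' e2') := core'.toNormedAddCommGroup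
  letI : InnerProductSpace ℂ (PerpSp e1' e2') := InnerProductSpace.ofCore core'.toCore
  have hinner : ∀ a b : PerpSp e1 e2, (inner ℂ a b : ℂ) = herm b.val a.val := fun a b => rfl
  have hinner' : ∀ a b : PerpSp e1' e2', (inner ℂ a b : ℂ) = herm b.val a.val := fun a b => rfl
  have hdim : Module.finrank ℂ (PerpSp e1 e2) = Module.finrank ℂ (PerpSp e1' e2') := by
    rw [finrank_PerpSp, finrank_PerpSp, finrank_Perp e1 e2 h11 h22 h12,
      finrank_Perp e1' e2' h11' h22' h12']
  set x : Fin 2 → PerpSp e1 e2 :=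
    ![(PerpSp.mk' (ρ (P 2)) (hρmem _) : PerpSp e1 e2), (PerpSp.mk' (ρ (P 3)) (hρmem _) : PerpSp e1 e2)] with hx
  set y : Fin 2 → PerpSp e1' e2' :=
    ![(PerpSp.mk' (ρ' (P' 2)) (hρ'mem _) : PerpSp e1' e2'), (PerpSp.mk' (ρ' (P' 3)) (hρ'mem _) : PerpSp e1' e2')] with hy
  have hgxy : ∀ i j, (inner ℂ (x i) (x j) : ℂ) = (inner ℂ (y i) (y j) : ℂ) := by
    intro i j
    rw [hinner, hinner']
    fin_cases i <;> fin_cases j <;>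
      simp only [hx, hy, Matrix.cons_val_zero, Matrix.cons_val_one, Matrix.head_cons,
        Fin.mk_zero, Fin.mk_one, PerpSp.val_mk] <;>
      exact hρg _ _
  obtain ⟨B, hBi, hBx⟩ := exists_isometric_extension hdim x y hgxy
  have hBherm : ∀ s t : PerpSp e1 e2, herm (B s).val (B t).val = herm s.val t.val :=
    fun s t => by
      have h1 := hBi t s
      rw [hinner, hinner'] at h1
      exact h1
  -- assemble A
  set A : (Fin (m+2) → ℂ) →ₗ[ℂ] (Fin (m+2) → ℂ) :=
    f2.smulRight e1' + f1.smulRight e2' +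
      (PerpSp.incl e1' e2').comp (B.comp (PerpSp.corestrict e1 e2 ρ hρmem)) with hA
  have hAapp : ∀ Z, A Z = herm Z e2 • e1' + herm Z e1 • e2' +
      (B (PerpSp.mk' (ρ Z) (hρmem Z) : PerpSp e1 e2)).val := fun Z => rfl
  have hBperp : ∀ s : PerpSp e1 e2, herm (B s).val e1' = 0 ∧ herm (B s).val e2' = 0 :=
    fun s => mem_Perp.1 (PerpSp.prop (B s))
  refine ⟨A, ?_, ?_⟩
  · intro Z W
    rw [hAapp, hAapp]
    have c1 : herm e1' (B (PerpSp.mk' (ρ W) (hρmem W) : PerpSp e1 e2)).val = 0 := by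
      rw [← herm_conj, (hBperp _).1, map_zero]
    have c2 : herm e2' (B (PerpSp.mk' (ρ W) (hρmem W) : PerpSp e1 e2)).val = 0 := by
      rw [← herm_conj, (hBperp _).2, map_zero]
    rw [hdec Z W]
    simp only [herm_add_left, herm_add_right, herm_smul_left, herm_smul_right,
      h11', h22', h12', h21', (hBperp _).1, (hBperp _).2, c1, c2, hBherm]
    simp only [PerpSp.val_mk]
    ring
  · intro i
    rw [hAapp]
    have hval2 : herm (P 0) e2 = 1 := h12
    have hval1 : herm (P 0) e1 = 0 := h11
    fin_cases i
    · -- i = 0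
      show herm (P 0) e2 • e1' + herm (P 0) e1 • e2' +
        (B (PerpSp.mk' (ρ (P 0)) (hρmem _) : PerpSp e1 e2)).val = P' 0
      have hzero : (PerpSp.mk' (ρ (P 0)) (hρmem _) : PerpSp e1 e2) = 0 := by
        apply PerpSp.ext
        rw [PerpSp.val_mk, hρ, PerpSp.val_zero, h12, h11]
        rw [he1]
        simp
      rw [hzero, map_zero, h12, h11]
      rw [he1']
      simp
    · -- i = 1
      show herm (P 1) e2 • e1' + herm (P 1) e1 • e2' +
        (B (PerpSp.mk' (ρ (P 1)) (hρmem _) : PerpSp e1 e2)).val = P' 1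
      have hP1e2 : herm (P 1) e2 = 0 := by
        rw [he2, herm_smul_right, hnull 1, mul_zero]
      have hP1e1 : herm (P 1) e1 = c⁻¹ := by
        have : herm e2 e1 = c * herm (P 1) e1 := by rw [he2, herm_smul_left]
        rw [h21] at this
        field_simp at this ⊢
        linear_combination -this
      have hzero : (PerpSp.mk' (ρ (P 1)) (hρmem _) : PerpSp e1 e2) = 0 := by
        apply PerpSp.ext
        rw [PerpSp.val_mk, hρ, PerpSp.val_zero, hP1e2, hP1e1]
        rw [he2]
        rw [smul_smul, inv_mul_cancel₀ hcne]
        simp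
      rw [hzero, map_zero, hP1e2, hP1e1]
      rw [he2', smul_smul, inv_mul_cancel₀ hcne]
      simp
    · -- i = 2
      show herm (P 2) e2 • e1' + herm (P 2) e1 • e2' +
        (B (PerpSp.mk' (ρ (P 2)) (hρmem _) : PerpSp e1 e2)).val = P' 2
      have hB2 : (B (PerpSp.mk' (ρ (P 2)) (hρmem _) : PerpSp e1 e2)).val = ρ' (P' 2) := by
        have := hBx 0
        simp only [hx, hy, Matrix.cons_val_zero] at this
        rw [this, PerpSp.val_mk]
      rw [hB2, a1 2, a2 2, hρ']
      abel
    · -- i = 3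
      show herm (P 3) e2 • e1' + herm (P 3) e1 • e2' +
        (B (PerpSp.mk' (ρ (P 3)) (hρmem _) : PerpSp e1 e2)).val = P' 3
      have hB3 : (B (PerpSp.mk' (ρ (P 3)) (hρmem _) : PerpSp e1 e2)).val = ρ' (P' 3) := by
        have := hBx 1
        simp only [hx, hy, Matrix.cons_val_one, Matrix.head_cons, Matrix.cons_val_zero] at this
        rw [this, PerpSp.val_mk]
      rw [hB3, a1 3, a2 3, hρ']
      abel

lemma diag_congr_apply (d : Fin 4 → ℂ) (G : Matrix (Fin 4) (Fin 4) ℂ) (i j : Fin 4) :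
    ((Matrix.diagonal d)ᴴ * G * Matrix.diagonal d) i j = conj (d i) * G i j * d j := by
  rw [Matrix.mul_diagonal, Matrix.diagonal_conjTranspose, Matrix.diagonal_mul]
  rfl

lemma n0_false (Z : Fin 1 → ℂ) (hz : Z ≠ 0) (h : herm Z Z = 0) : False := by
  have hempty : (Finset.univ.filter (fun i : Fin 1 => i ≠ 0 ∧ i ≠ Fin.last 0)) = ∅ := by decide
  have hlast : (Fin.last 0 : Fin 1) = 0 := rfl
  rw [herm, hempty, hlast, Finset.sum_empty, add_zero, Complex.mul_conj] at h
  have h2 : Z 0 = 0 := by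
    have h3 := congrArg Complex.re h
    simp at h3
    exact h3
  apply hz
  funext i
  rw [Subsingleton.elim i 0]
  exact h2

theorem stmt1' (n : ℕ) (P P' : Fin 4 → Fin (n + 1) → ℂ)
    (hP : IsNullQuadruple P) (hP' : IsNullQuadruple P') :
    (∃ A : (Fin (n + 1) → ℂ) →ₗ[ℂ] (Fin (n + 1) → ℂ),
      (∀ Z W, herm (A Z) (A W) = herm Z W) ∧
      ∃ lam : Fin 4 → ℂ, (∀ i, lam i ≠ 0) ∧ ∀ i, A (P i) = lam i • P' i) ↔
      ∃ d : Fin 4 → ℂ, (∀ i, d i ≠ 0) ∧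
        (fun i j => herm (P' i) (P' j)) = fun i j =>
          ((Matrix.diagonal d)ᴴ * (Matrix.of fun i j => herm (P i) (P j)) * Matrix.diagonal d) i j := by
  constructor
  · rintro ⟨A, hA, lam, hlam, hAP⟩
    refine ⟨fun i => (conj (lam i))⁻¹, fun i => inv_ne_zero (by simpa using hlam i), ?_⟩
    funext i j
    rw [diag_congr_apply]
    have key : herm (P i) (P j) = lam i * conj (lam j) * herm (P' i) (P' j) := by
      rw [← hA (P i) (P j), hAP i, hAP j, herm_smul_left, herm_smul_right]; ring
    show herm (P' i) (P' j)
      = conj ((conj (lam i))⁻¹) * (Matrix.of fun i j => herm (P i) (P j)) i j * (conj (lam j))⁻¹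
    rw [map_inv₀, Complex.conj_conj]
    have h1 : lam i ≠ 0 := hlam i
    have h2 : (conj (lam j) : ℂ) ≠ 0 := by simpa using hlam j
    rw [show (Matrix.of fun i j => herm (P i) (P j)) i j = herm (P i) (P j) from rfl, key]
    field_simp
  · rintro ⟨d, hd, hgram⟩
    have hgij' : ∀ i j, herm (P' i) (P' j) = conj (d i) * herm (P i) (P j) * d j := by
      intro i j
      have h0 := congrFun (congrFun hgram i) j
      rw [diag_congr_apply] at h0
      exact h0
    rcases n with _ | m
    · exact absurd (hP.2.1 0) (fun h => n0_false (P 0) (hP.1 0) h)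
    · obtain ⟨hne, hnull, hind⟩ := hP
      obtain ⟨hne', hnull', hind'⟩ := hP'
      set Q : Fin 4 → Fin (m+2) → ℂ := fun i => conj (d i) • P i with hQ
      have hdc : ∀ i, (conj (d i) : ℂ) ≠ 0 := fun i => by simpa using hd i
      have hQne : ∀ i, Q i ≠ 0 := fun i => smul_ne_zero (hdc i) (hne i)
      have hQnull : ∀ i, herm (Q i) (Q i) = 0 := fun i => by
        rw [hQ]; simp only
        rw [herm_smul_left, herm_smul_right, hnull i]; ring
      have hQind : ∀ i j, i ≠ j → LinearIndependent ℂ ![Q i, Q j] := by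
        intro i j hij
        have h0 := (hind i j hij).units_smul ![Units.mk0 _ (hdc i), Units.mk0 _ (hdc j)]
        have heq : ![Q i, Q j]
            = (![Units.mk0 _ (hdc i), Units.mk0 _ (hdc j)] : Fin 2 → ℂˣ) • ![P i, P j] := by
          funext k
          fin_cases k <;> simp [hQ, Units.smul_def, Pi.smul_apply']
        rw [heq]
        exact h0
      have hQg : ∀ i j, herm (Q i) (Q j) = herm (P' i) (P' j) := by
        intro i j
        rw [hQ]; simp only
        rw [herm_smul_left, herm_smul_right, Complex.conj_conj, hgij' i j]
        ring
      obtain ⟨A, hA, hAQ⟩ := congruent_of_gram_eq Q P' hQne hQnull hQind hnull' hQg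
      refine ⟨A, hA, fun i => (conj (d i))⁻¹, fun i => inv_ne_zero (hdc i), fun i => ?_⟩
      have hPi : P i = (conj (d i))⁻¹ • Q i := by
        rw [hQ]; simp only
        rw [smul_smul, inv_mul_cancel₀ (hdc i), one_smul]
      rw [hPi, LinearMap.map_smul, hAQ i]


/-- congruence of quadruples corresponds to equivalence of Gram matrices. -/
theorem stmt1 (n : ℕ) (P P' : Fin 4 → Fin (n + 1) → ℂ)
    (hP : IsNullQuadruple P) (hP' : IsNullQuadruple P') :
    QuadCongruent P P' ↔
      ∃ d : Fin 4 → ℂ, (∀ i, d i ≠ 0) ∧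
        gram P' = (Matrix.diagonal d)ᴴ * gram P * Matrix.diagonal d :=
  stmt1' n P P' hP hP'
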